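/- Suppose (I_1, …, I_n) with I_j = (a_j, b_j] is the greedy partition of (a, b]: a_1 = a, a_{j+1} = b_j, b_n = b, each P(X ∈ I_j) > 0, Δ_X(I_j) ≤ ε for all j ∈ {1, …, n}, b_j ∈ S for j ∈ {1, …, n−1}, and for every j ∈ {1, …, n−1} and every y ∈ S with b_j < y ≤ b one has Δ_X((a_j, y]) > ε. Then for any m and any partition (I*_1, …, I*_m) of (a, b] into consecutive half-open intervals I*_j = (a*_j, b*_j] with a*_1 = a, b*_m = b, b*_j ∈ S for j ∈ {1, …, m−1}, P(X ∈ I*_j) > 0 and Δ_X(I*_j) ≤ ε for all j, one has m ≥ n. In other words, the greedy partition minimizes the number of intervals subject to the per-interval error constraint. -/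

import Mathlib

open MeasureTheory

/-- `μ_{(u,v]} = E[X | X ∈ (u, v]]`. -/
noncomputable def intervalMean {Ω : Type*} [MeasurableSpace Ω]
    (P : Measure Ω) (X : Ω → ℝ) (u v : ℝ) : ℝ :=
  (∫ ω in {ω | X ω ∈ Set.Ioc u v}, X ω ∂P) / (P {ω | X ω ∈ Set.Ioc u v}).toReal

/-- Per-interval approximation error
`Δ_X((u,v]) = E[1_{u < X ≤ μ_{(u,v]}} (μ_{(u,v]} − X)]`. -/
noncomputable def Delta {Ω : Type*} [MeasurableSpace Ω]
    (P : Measure Ω) (X : Ω → ℝ) (u v : ℝ) : ℝ :=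
  ∫ ω in {ω | X ω ∈ Set.Ioc u (intervalMean P X u v)},
    (intervalMean P X u v - X ω) ∂P

open Set

section Core

variable {Ω : Type*} [MeasurableSpace Ω] {P : Measure Ω} [IsProbabilityMeasure P]
  {Y : Ω → ℝ} (hY : Measurable Y) (hInt : Integrable Y P)

include hY hInt

lemma mean_le (u v : ℝ) (hP : 0 < P {ω | Y ω ∈ Set.Ioc u v}) :
    u ≤ intervalMean P Y u v ∧ intervalMean P Y u v ≤ v := by
  set A : Set Ω := {ω | Y ω ∈ Set.Ioc u v} with hA
  have hAm : MeasurableSet A := hY measurableSet_Ioc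
  have hc : 0 < (P A).toReal := ENNReal.toReal_pos hP.ne' (measure_ne_top P A)
  have hle : ∫ ω in A, Y ω ∂P ≤ (P A).toReal * v := by
    calc ∫ ω in A, Y ω ∂P ≤ ∫ _ in A, v ∂P :=
          setIntegral_mono_on hInt.integrableOn
            (integrableOn_const (measure_ne_top P A)) hAm
            (fun ω hω => hω.2)
      _ = (P A).toReal * v := by rw [setIntegral_const]; ring_nf; rfl
  have hge : (P A).toReal * u ≤ ∫ ω in A, Y ω ∂P := by
    calc (P A).toReal * u = ∫ _ in A, u ∂P := by rw [setIntegral_const]; rw [smul_eq_mul, Measure.real_def]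
      _ ≤ ∫ ω in A, Y ω ∂P :=
          setIntegral_mono_on (integrableOn_const (measure_ne_top P A))
            hInt.integrableOn hAm (fun ω hω => hω.1.le)
  constructor
  · rw [intervalMean, ← hA, le_div_iff₀ hc]; linarith
  · rw [intervalMean, ← hA, div_le_iff₀ hc]; linarith

lemma integral_sub_mean (u v : ℝ) (hP : 0 < P {ω | Y ω ∈ Set.Ioc u v}) :
    ∫ ω in {ω | Y ω ∈ Set.Ioc u v}, (intervalMean P Y u v - Y ω) ∂P = 0 := by
  set A : Set Ω := {ω | Y ω ∈ Set.Ioc u v} with hA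
  have hc : 0 < (P A).toReal := ENNReal.toReal_pos hP.ne' (measure_ne_top P A)
  rw [integral_sub (integrableOn_const (measure_ne_top P A) :
      IntegrableOn (fun _ => intervalMean P Y u v) A P) hInt.integrableOn,
    setIntegral_const, intervalMean, ← hA, smul_eq_mul, Measure.real_def]
  field_simp
  ring

/-- The two equivalent forms of `Delta`. -/
lemma delta_forms (u v : ℝ) (hP : 0 < P {ω | Y ω ∈ Set.Ioc u v}) :
    Delta P Y u v
      = ∫ ω in {ω | Y ω ∈ Set.Ioc u v}, max (intervalMean P Y u v - Y ω) 0 ∂P ∧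
    Delta P Y u v
      = ∫ ω in {ω | Y ω ∈ Set.Ioc u v}, max (Y ω - intervalMean P Y u v) 0 ∂P := by
  set μ := intervalMean P Y u v with hμ
  have hμv : μ ≤ v := (mean_le hY hInt u v hP).2
  set A : Set Ω := {ω | Y ω ∈ Set.Ioc u v} with hA
  have hAm : MeasurableSet A := hY measurableSet_Ioc
  have hIic : MeasurableSet (Y ⁻¹' Iic μ) := hY measurableSet_Iic
  have hAeq : {ω | Y ω ∈ Set.Ioc u μ} = A ∩ Y ⁻¹' Iic μ := by
    ext ω
    simp only [hA, Set.mem_setOf_eq, Set.mem_Ioc, Set.mem_inter_iff, Set.mem_preimage,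
      Set.mem_Iic]
    exact ⟨fun h => ⟨⟨h.1, h.2.trans hμv⟩, h.2⟩, fun h => ⟨h.1.1, h.2⟩⟩
  have hIntMax : IntegrableOn (fun ω => max (μ - Y ω) 0) A P :=
    ((integrableOn_const (measure_ne_top P A)).sub hInt.integrableOn).pos_part
  have hIntMax' : IntegrableOn (fun ω => max (Y ω - μ) 0) A P :=
    (hInt.integrableOn.sub (integrableOn_const (measure_ne_top P A))).pos_part
  have h1 : Delta P Y u v = ∫ ω in A, max (μ - Y ω) 0 ∂P := by
    rw [Delta, ← hμ, hAeq]
    rw [← integral_inter_add_diff (f := fun ω => max (μ - Y ω) 0) hIic hIntMax]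
    have hz : ∫ ω in A \ Y ⁻¹' Iic μ, max (μ - Y ω) 0 ∂P = 0 := by
      rw [setIntegral_congr_fun (hAm.diff hIic) (g := fun _ => (0:ℝ))
        (fun ω hω => by
          simp only [Set.mem_diff, Set.mem_preimage, Set.mem_Iic, not_le] at hω
          simp [max_eq_right, sub_nonpos, hω.2.le]),
        integral_const, smul_zero]
    rw [hz, add_zero]
    exact setIntegral_congr_fun (hAm.inter hIic)
      (fun ω hω => by
        simp only [Set.mem_inter_iff, Set.mem_preimage, Set.mem_Iic] at hω
        simp [max_eq_left, sub_nonneg, hω.2])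
  refine ⟨h1, ?_⟩
  rw [h1]
  have hzero := integral_sub_mean hY hInt u v hP
  rw [← hμ, ← hA] at hzero
  have hsub : ∫ ω in A, (max (μ - Y ω) 0 - max (Y ω - μ) 0) ∂P
      = ∫ ω in A, (μ - Y ω) ∂P := by
    refine integral_congr_ae (Filter.Eventually.of_forall fun ω => ?_)
    have := max_zero_sub_eq_self (μ - Y ω)
    rw [neg_sub] at this
    simpa using this
  have := integral_sub hIntMax hIntMax'
  rw [hsub, hzero] at this
  linarith [this]

/-- Monotonicity in the left endpoint: enlarging the interval to the left
increases the error. -/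
lemma delta_mono_left (u u' v : ℝ) (huu : u ≤ u') (hv : u' < v)
    (hP' : 0 < P {ω | Y ω ∈ Set.Ioc u' v}) :
    Delta P Y u' v ≤ Delta P Y u v := by
  set A' : Set Ω := {ω | Y ω ∈ Set.Ioc u' v} with hA'
  set A : Set Ω := {ω | Y ω ∈ Set.Ioc u v} with hA
  have hsub : A' ⊆ A := fun ω hω => ⟨lt_of_le_of_lt huu hω.1, hω.2⟩
  have hP : 0 < P A := lt_of_lt_of_le hP' (measure_mono hsub)
  have hAm : MeasurableSet A := hY measurableSet_Ioc
  have hA'm : MeasurableSet A' := hY measurableSet_Ioc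
  set B : Set Ω := {ω | Y ω ∈ Set.Ioc u u'} with hB
  have hBm : MeasurableSet B := hY measurableSet_Ioc
  have hunion : A = B ∪ A' := by
    rw [hA, hB, hA']
    have : Ioc u u' ∪ Ioc u' v = Ioc u v := Set.Ioc_union_Ioc_eq_Ioc huu hv.le
    ext ω; simp only [Set.mem_setOf_eq, Set.mem_union, ← this, Set.mem_union]
  have hdisj : Disjoint B A' := by
    have : Disjoint (Ioc u u') (Ioc u' v) := Set.Ioc_disjoint_Ioc_of_le le_rfl
    exact Set.disjoint_left.2 fun ω h1 h2 => Set.disjoint_left.1 this h1 h2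
  set μ := intervalMean P Y u v with hμ
  set μ' := intervalMean P Y u' v with hμ'
  have hc : 0 < (P A).toReal := ENNReal.toReal_pos hP.ne' (measure_ne_top P A)
  have hc' : 0 < (P A').toReal := ENNReal.toReal_pos hP'.ne' (measure_ne_top P A')
  -- μ ≤ μ'
  have hμμ' : μ ≤ μ' := by
    have hsplit : ∫ ω in A, Y ω ∂P = ∫ ω in B, Y ω ∂P + ∫ ω in A', Y ω ∂P := by
      rw [hunion]; exact setIntegral_union hdisj hA'm hInt.integrableOn hInt.integrableOn
    have hmeas : (P A).toReal = (P B).toReal + (P A').toReal := by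
      rw [hunion, measure_union hdisj hA'm,
        ENNReal.toReal_add (measure_ne_top P B) (measure_ne_top P A')]
    have hBle : ∫ ω in B, Y ω ∂P ≤ (P B).toReal * u' := by
      calc ∫ ω in B, Y ω ∂P ≤ ∫ _ in B, u' ∂P :=
            setIntegral_mono_on hInt.integrableOn
              (integrableOn_const (measure_ne_top P B)) hBm
              (fun ω hω => hω.2)
        _ = (P B).toReal * u' := by rw [setIntegral_const]; ring_nf; rfl
    have hu'μ' : u' ≤ μ' := (mean_le hY hInt u' v hP').1
    have hA'eq : ∫ ω in A', Y ω ∂P = μ' * (P A').toReal := by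
      rw [hμ', intervalMean, ← hA', div_mul_cancel₀ _ hc'.ne']
    have : ∫ ω in A, Y ω ∂P ≤ μ' * (P A).toReal := by
      rw [hsplit, hmeas]
      nlinarith [ENNReal.toReal_nonneg (a := P B)]
    rw [hμ, intervalMean, ← hA, div_le_iff₀ hc]
    linarith
  -- now compare Deltas using the (Y − μ)⁺ form
  have hD' := (delta_forms hY hInt u' v hP').2
  have hD := (delta_forms hY hInt u v hP).2
  rw [hD', hD, ← hA, ← hA', ← hμ, ← hμ']
  have hIntA : IntegrableOn (fun ω => max (Y ω - μ) 0) A P :=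
    (hInt.integrableOn.sub (integrableOn_const (measure_ne_top P A))).pos_part
  calc ∫ ω in A', max (Y ω - μ') 0 ∂P ≤ ∫ ω in A', max (Y ω - μ) 0 ∂P := by
        refine setIntegral_mono_on
          ((hInt.integrableOn.sub (integrableOn_const (measure_ne_top P A'))).pos_part)
          (hIntA.mono_set hsub) hA'm (fun ω _ => ?_)
        exact max_le_max (by linarith) le_rfl
    _ ≤ ∫ ω in A, max (Y ω - μ) 0 ∂P := by
        refine setIntegral_mono_set hIntA
          (Filter.Eventually.of_forall fun ω => le_max_right _ _)
          (HasSubset.Subset.eventuallyLE hsub)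

/-- Monotonicity in the right endpoint. -/
lemma delta_mono_right (u v' v : ℝ) (hu : u < v') (hvv : v' ≤ v)
    (hP' : 0 < P {ω | Y ω ∈ Set.Ioc u v'}) :
    Delta P Y u v' ≤ Delta P Y u v := by
  set A' : Set Ω := {ω | Y ω ∈ Set.Ioc u v'} with hA'
  set A : Set Ω := {ω | Y ω ∈ Set.Ioc u v} with hA
  have hsub : A' ⊆ A := fun ω hω => ⟨hω.1, hω.2.trans hvv⟩
  have hP : 0 < P A := lt_of_lt_of_le hP' (measure_mono hsub)
  have hAm : MeasurableSet A := hY measurableSet_Ioc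
  have hA'm : MeasurableSet A' := hY measurableSet_Ioc
  set B : Set Ω := {ω | Y ω ∈ Set.Ioc v' v} with hB
  have hBm : MeasurableSet B := hY measurableSet_Ioc
  have hunion : A = A' ∪ B := by
    rw [hA, hB, hA']
    have : Ioc u v' ∪ Ioc v' v = Ioc u v := Set.Ioc_union_Ioc_eq_Ioc hu.le hvv
    ext ω; simp only [Set.mem_setOf_eq, Set.mem_union, ← this, Set.mem_union]
  have hdisj : Disjoint A' B := by
    have : Disjoint (Ioc u v') (Ioc v' v) := Set.Ioc_disjoint_Ioc_of_le le_rfl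
    exact Set.disjoint_left.2 fun ω h1 h2 => Set.disjoint_left.1 this h1 h2
  set μ := intervalMean P Y u v with hμ
  set μ' := intervalMean P Y u v' with hμ'
  have hc : 0 < (P A).toReal := ENNReal.toReal_pos hP.ne' (measure_ne_top P A)
  have hc' : 0 < (P A').toReal := ENNReal.toReal_pos hP'.ne' (measure_ne_top P A')
  have hμ'μ : μ' ≤ μ := by
    have hsplit : ∫ ω in A, Y ω ∂P = ∫ ω in A', Y ω ∂P + ∫ ω in B, Y ω ∂P := by
      rw [hunion]; exact setIntegral_union hdisj hBm hInt.integrableOn hInt.integrableOn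
    have hmeas : (P A).toReal = (P A').toReal + (P B).toReal := by
      rw [hunion, measure_union hdisj hBm,
        ENNReal.toReal_add (measure_ne_top P A') (measure_ne_top P B)]
    have hBge : (P B).toReal * v' ≤ ∫ ω in B, Y ω ∂P := by
      calc (P B).toReal * v' = ∫ _ in B, v' ∂P := by rw [setIntegral_const]; rw [smul_eq_mul, Measure.real_def]
        _ ≤ ∫ ω in B, Y ω ∂P :=
            setIntegral_mono_on (integrableOn_const (measure_ne_top P B))
              hInt.integrableOn hBm (fun ω hω => hω.1.le)
    have hμ'v' : μ' ≤ v' := (mean_le hY hInt u v' hP').2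
    have hA'eq : ∫ ω in A', Y ω ∂P = μ' * (P A').toReal := by
      rw [hμ', intervalMean, ← hA', div_mul_cancel₀ _ hc'.ne']
    have : μ' * (P A).toReal ≤ ∫ ω in A, Y ω ∂P := by
      rw [hsplit, hmeas]
      nlinarith [ENNReal.toReal_nonneg (a := P B)]
    rw [hμ, intervalMean, ← hA, le_div_iff₀ hc]
    linarith
  have hD' := (delta_forms hY hInt u v' hP').1
  have hD := (delta_forms hY hInt u v hP).1
  rw [hD', hD, ← hA, ← hA', ← hμ, ← hμ']
  have hIntA : IntegrableOn (fun ω => max (μ - Y ω) 0) A P :=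
    ((integrableOn_const (measure_ne_top P A)).sub hInt.integrableOn).pos_part
  calc ∫ ω in A', max (μ' - Y ω) 0 ∂P ≤ ∫ ω in A', max (μ - Y ω) 0 ∂P := by
        refine setIntegral_mono_on
          (((integrableOn_const (measure_ne_top P A')).sub hInt.integrableOn).pos_part)
          (hIntA.mono_set hsub) hA'm (fun ω _ => ?_)
        exact max_le_max (by linarith) le_rfl
    _ ≤ ∫ ω in A, max (μ - Y ω) 0 ∂P :=
        setIntegral_mono_set hIntA
          (Filter.Eventually.of_forall fun ω => le_max_right _ _)
          (HasSubset.Subset.eventuallyLE hsub)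

end Core

section Transfer

variable {Ω : Type*} [MeasurableSpace Ω] {P : Measure Ω} {X Y : Ω → ℝ}

lemma measure_mem_congr (hXY : X =ᵐ[P] Y) (s : Set ℝ) :
    P {ω | X ω ∈ s} = P {ω | Y ω ∈ s} := by
  refine measure_congr (Filter.eventuallyEq_set.2 (hXY.mono fun ω h => ?_))
  simp only [Set.mem_setOf_eq, h]

lemma intervalMean_congr (hXY : X =ᵐ[P] Y) (u v : ℝ) :
    intervalMean P X u v = intervalMean P Y u v := by
  rw [intervalMean, intervalMean, measure_mem_congr hXY]
  congr 1
  calc ∫ ω in {ω | X ω ∈ Ioc u v}, X ω ∂P = ∫ ω in {ω | X ω ∈ Ioc u v}, Y ω ∂P :=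
        integral_congr_ae (ae_restrict_of_ae hXY)
    _ = ∫ ω in {ω | Y ω ∈ Ioc u v}, Y ω ∂P :=
        setIntegral_congr_set (Filter.eventuallyEq_set.2 (hXY.mono fun ω h => by
          simp only [Set.mem_setOf_eq, h]))

lemma Delta_congr (hXY : X =ᵐ[P] Y) (u v : ℝ) :
    Delta P X u v = Delta P Y u v := by
  rw [Delta, Delta, intervalMean_congr hXY]
  set μ := intervalMean P Y u v
  calc ∫ ω in {ω | X ω ∈ Ioc u μ}, (μ - X ω) ∂P
      = ∫ ω in {ω | X ω ∈ Ioc u μ}, (μ - Y ω) ∂P :=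
        integral_congr_ae (ae_restrict_of_ae (hXY.mono fun ω h => by simp only []; rw [h]))
    _ = ∫ ω in {ω | Y ω ∈ Ioc u μ}, (μ - Y ω) ∂P :=
        setIntegral_congr_set (Filter.eventuallyEq_set.2 (hXY.mono fun ω h => by
          simp only [Set.mem_setOf_eq, h]))

end Transfer

lemma mono_aux (f : ℕ → ℝ) (N : ℕ) (h : ∀ i < N, f i < f (i + 1)) :
    ∀ i j, i < j → j ≤ N → f i < f j := by
  intro i j hij hjN
  induction j with
  | zero => omega
  | succ k ih =>
    rcases Nat.lt_succ_iff_lt_or_eq.mp hij with h' | h'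
    · exact (ih h' (by omega)).trans (h k (by omega))
    · subst h'; exact h i (by omega)

lemma mono_aux_le (f : ℕ → ℝ) (N : ℕ) (h : ∀ i < N, f i < f (i + 1)) :
    ∀ i j, i ≤ j → j ≤ N → f i ≤ f j := by
  intro i j hij hjN
  rcases eq_or_lt_of_le hij with rfl | h'
  · exact le_rfl
  · exact (mono_aux f N h i j h' hjN).le

/-- Optimality of the greedy partition: if `(I_1,…,I_n)` with
`I_j = (q (j−1), q j]` is the greedy partition of `(a, b]` (each interval has positive
probability and error `≤ ε`, interior endpoints lie in the support `S`, and extending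
any interval to the next support point makes its error exceed `ε`), then every partition
`(I*_1,…,I*_m)` of `(a, b]` into consecutive half-open intervals with interior endpoints
in `S`, positive probabilities, and per-interval error `≤ ε` satisfies `m ≥ n`. -/
theorem greedy_partition_optimal {Ω : Type*} [MeasurableSpace Ω]
    (P : Measure Ω) [IsProbabilityMeasure P]
    (X : Ω → ℝ) (hX : Integrable X P)
    (S : Set ℝ) (hS : ∀ ω, X ω ∈ S)
    (a b : ℝ) (hab : a < b) (ε : ℝ) (hε : 0 < ε)
    (n : ℕ) (hn : 1 ≤ n)
    (q : ℕ → ℝ) (hq0 : q 0 = a) (hqn : q n = b)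
    (hqmono : ∀ i < n, q i < q (i + 1))
    (hqS : ∀ j, 1 ≤ j → j ≤ n - 1 → q j ∈ S)
    (hqpos : ∀ j, 1 ≤ j → j ≤ n → 0 < P {ω | X ω ∈ Set.Ioc (q (j - 1)) (q j)})
    (hqerr : ∀ j, 1 ≤ j → j ≤ n → Delta P X (q (j - 1)) (q j) ≤ ε)
    (hgreedy : ∀ j, 1 ≤ j → j ≤ n - 1 →
      ∀ y ∈ S, q j < y → y ≤ b → Delta P X (q (j - 1)) y > ε)
    (m : ℕ) (hm : 1 ≤ m)
    (r : ℕ → ℝ) (hr0 : r 0 = a) (hrm : r m = b)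
    (hrmono : ∀ i < m, r i < r (i + 1))
    (hrS : ∀ j, 1 ≤ j → j ≤ m - 1 → r j ∈ S)
    (hrpos : ∀ j, 1 ≤ j → j ≤ m → 0 < P {ω | X ω ∈ Set.Ioc (r (j - 1)) (r j)})
    (hrerr : ∀ j, 1 ≤ j → j ≤ m → Delta P X (r (j - 1)) (r j) ≤ ε) :
    n ≤ m := by
  -- measurable representative of X
  obtain ⟨hXm, hXY⟩ : ∃ h : AEStronglyMeasurable X P, X =ᵐ[P] h.mk X := ⟨hX.1, hX.1.ae_eq_mk⟩
  set Y : Ω → ℝ := hXm.mk X with hYdef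
  have hYm : Measurable Y := hXm.stronglyMeasurable_mk.measurable
  have hYInt : Integrable Y P := hX.congr hXY
  -- transfer of positivity to Y-sets
  have hposY : ∀ u v : ℝ, 0 < P {ω | X ω ∈ Set.Ioc u v} →
      0 < P {ω | Y ω ∈ Set.Ioc u v} := by
    intro u v h; rwa [measure_mem_congr hXY] at h
  -- key claim: the greedy partition is always ahead
  have key : ∀ j, j ≤ m → j + 1 ≤ n → r j ≤ q j := by
    intro j
    induction j with
    | zero => intro _ _; rw [hr0, hq0]
    | succ k ih =>
      intro hkm hkn
      have hrq : r k ≤ q k := ih (by omega) (by omega)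
      by_contra hlt
      push_neg at hlt
      have hqk : q k < q (k + 1) := hqmono k (by omega)
      -- find y ∈ S with q (k+1) < y ≤ b and Delta P X (r k) y ≤ ε
      obtain ⟨y, hyS, hy1, hy2, hy3⟩ :
          ∃ y, y ∈ S ∧ q (k + 1) < y ∧ y ≤ b ∧ Delta P X (r k) y ≤ ε := by
        rcases lt_or_eq_of_le hkm with hkm' | hkm'
        · -- k + 1 < m : take y = r (k+1)
          refine ⟨r (k + 1), hrS (k + 1) (by omega) (by omega), hlt, ?_, ?_⟩
          · rw [← hrm]; exact mono_aux_le r m hrmono (k + 1) m hkm (le_rfl)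
          · have := hrerr (k + 1) (by omega) hkm
            simpa using this
        · -- k + 1 = m : take a support point in (q (k+1), q (k+2)]
          have hk2n : k + 2 ≤ n := by omega
          have hne : {ω | X ω ∈ Set.Ioc (q (k + 1)) (q (k + 2))}.Nonempty := by
            refine nonempty_of_measure_ne_zero (μ := P) ?_
            have := hqpos (k + 2) (by omega) hk2n
            simpa using this.ne'
          obtain ⟨ω, hω⟩ := hne
          refine ⟨X ω, hS ω, hω.1, ?_, ?_⟩
          · calc X ω ≤ q (k + 2) := hω.2
              _ ≤ q n := mono_aux_le q n hqmono (k + 2) n hk2n le_rfl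
              _ = b := hqn
          · -- Delta P X (r k) (X ω) ≤ Delta P X (r k) (r (k+1)) ≤ ε
            have hrb : r (k + 1) = b := by rw [hkm', hrm]
            have hyb : X ω ≤ r (k + 1) := by
              rw [hrb]
              calc X ω ≤ q (k + 2) := hω.2
                _ ≤ q n := mono_aux_le q n hqmono (k + 2) n hk2n le_rfl
                _ = b := hqn
            have hrky : r k < X ω := by
              calc r k ≤ q k := hrq
                _ < q (k + 1) := hqk
                _ < X ω := hω.1
            have hpos : 0 < P {ω' | Y ω' ∈ Set.Ioc (r k) (X ω)} := by
              refine lt_of_lt_of_le (hposY (q k) (q (k + 1)) ?_) (measure_mono ?_)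
              · have := hqpos (k + 1) (by omega) (by omega)
                simpa using this
              · intro ω' hω'
                exact ⟨lt_of_le_of_lt hrq hω'.1, hω'.2.trans hω.1.le⟩
            have := delta_mono_right (P := P) hYm hYInt (r k) (X ω) (r (k + 1))
              hrky hyb hpos
            rw [← Delta_congr hXY, ← Delta_congr hXY] at this
            refine this.trans ?_
            have := hrerr (k + 1) (by omega) hkm
            simpa using this
      -- greedy property contradicts
      have hgr : Delta P X (q k) y > ε := by
        have := hgreedy (k + 1) (by omega) (by omega) y hyS hy1 hy2
        simpa using this
      have hpos2 : 0 < P {ω' | Y ω' ∈ Set.Ioc (q k) y} := by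
        refine lt_of_lt_of_le (hposY (q k) (q (k + 1)) ?_) (measure_mono ?_)
        · have := hqpos (k + 1) (by omega) (by omega)
          simpa using this
        · intro ω' hω'
          exact ⟨hω'.1, hω'.2.trans hy1.le⟩
      have hmono := delta_mono_left (P := P) hYm hYInt (r k) (q k) y hrq
        (hqk.trans hy1) hpos2
      rw [← Delta_congr hXY, ← Delta_congr hXY] at hmono
      linarith
  -- conclusion
  by_contra hmn
  push_neg at hmn
  have h1 : r m ≤ q m := key m le_rfl (by omega)
  have h2 : q m < q n := mono_aux q n hqmono m n hmn le_rfl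
  rw [hrm] at h1; rw [hqn] at h2
  linarith
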